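/- Let X : Ω → ℝⁿ and ε : Ω → ℝᵐ be square-integrable random vectors on a probability space, with X and ε independent and E[ε] = 0. Let F ∈ ℝ^{m×n}, set Y = F X + ε, and let Γ_X = E[X Xᵀ] and Γ_Y = E[Y Yᵀ]. Suppose L_X is a matrix with Γ_X = L_X L_Xᵀ. Then for every A ∈ ℝ^{m×n}, E‖A X − Y‖₂² = ‖A L_X − F L_X‖_F² − ‖F L_X‖_F² + tr(Γ_Y). -/

import Mathlib

open Matrix MeasureTheory

/-- Second (cross-)moment matrix `E[X Yᵀ]` of two random vectors. -/
noncomputable def secondMoment {Ω : Type} [MeasurableSpace Ω] (μ : Measure Ω)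
    {n m : ℕ} (X : Ω → Fin n → ℝ) (Y : Ω → Fin m → ℝ) : Matrix (Fin n) (Fin m) ℝ :=
  Matrix.of fun i j => ∫ ω, X ω i * Y ω j ∂μ

/-- Frobenius norm of a real matrix. -/
noncomputable def frob {m n : ℕ} (A : Matrix (Fin m) (Fin n) ℝ) : ℝ :=
  Real.sqrt (∑ i, ∑ j, (A i j) ^ 2)

section Aux

variable {Ω : Type} [MeasurableSpace Ω] {μ : Measure Ω} [IsProbabilityMeasure μ]

lemma memLp_proj {n : ℕ} {X : Ω → Fin n → ℝ} (hX : MemLp X 2 μ) (i : Fin n) :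
    MemLp (fun ω => X ω i) 2 μ :=
  (ContinuousLinearMap.proj (R := ℝ) (φ := fun _ : Fin n => ℝ) i).comp_memLp' hX

lemma integrable_mul2 {f g : Ω → ℝ} (hf : MemLp f 2 μ) (hg : MemLp g 2 μ) :
    Integrable (fun ω => f ω * g ω) μ := by
  have h : MemLp (f • g) 1 μ := hg.smul hf (hpqr := ⟨by rw [inv_one, ENNReal.inv_two_add_inv_two]⟩)
  have := memLp_one_iff_integrable.mp h
  exact this

lemma memLp_mulVec {n m : ℕ} {X : Ω → Fin n → ℝ} (hX : MemLp X 2 μ)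
    (B : Matrix (Fin m) (Fin n) ℝ) (i : Fin m) :
    MemLp (fun ω => (B *ᵥ X ω) i) 2 μ := by
  have : (fun ω => (B *ᵥ X ω) i) = fun ω => ∑ j, B i j * X ω j := by
    funext ω; simp [Matrix.mulVec, dotProduct]
  rw [this]
  have := memLp_finset_sum' (μ := μ) (p := 2) Finset.univ
    (f := fun j (ω : Ω) => B i j * X ω j) (fun j _ => (memLp_proj hX j).const_mul (B i j))
  exact this.ae_eq (Filter.EventuallyEq.of_eq (by funext ω; simp))

lemma frob_sq {m n : ℕ} (A : Matrix (Fin m) (Fin n) ℝ) :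
    frob A ^ 2 = ∑ i, ∑ j, (A i j) ^ 2 := by
  rw [frob, Real.sq_sqrt]
  positivity

/-- Key lemma: second moment expansion. -/
lemma key {n m k : ℕ} (X : Ω → Fin n → ℝ) (ε : Ω → Fin m → ℝ)
    (hX : MemLp X 2 μ) (hε : MemLp ε 2 μ)
    (hindep : ProbabilityTheory.IndepFun X ε μ)
    (hmean : (∫ ω, ε ω ∂μ) = 0)
    (B : Matrix (Fin m) (Fin n) ℝ) (LX : Matrix (Fin n) (Fin k) ℝ)
    (hLX : secondMoment μ X X = LX * LXᵀ) :
    ∫ ω, ∑ i, (B *ᵥ X ω + ε ω) i ^ 2 ∂μ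
      = frob (B * LX) ^ 2 + ∑ i, ∫ ω, ε ω i ^ 2 ∂μ := by
  classical
  set g : Fin m → Ω → ℝ := fun i ω => (B *ᵥ X ω) i with hgdef
  have hg : ∀ i, MemLp (g i) 2 μ := memLp_mulVec hX B
  have hεi : ∀ i, MemLp (fun ω => ε ω i) 2 μ := memLp_proj hε
  have hXi : ∀ i, MemLp (fun ω => X ω i) 2 μ := memLp_proj hX
  have hεint : Integrable ε μ :=
    memLp_one_iff_integrable.mp (hε.mono_exponent one_le_two)
  have hmeani : ∀ i, ∫ ω, ε ω i ∂μ = 0 := by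
    intro i
    have := (ContinuousLinearMap.proj (R := ℝ) (φ := fun _ : Fin m => ℝ) i).integral_comp_comm
      hεint
    simpa [hmean] using this
  -- cross terms vanish
  have hcross : ∀ i, ∫ ω, g i ω * ε ω i ∂μ = 0 := by
    intro i
    have hmeas : Measurable fun v : Fin n → ℝ => (B *ᵥ v) i := by
      have : (fun v : Fin n → ℝ => (B *ᵥ v) i) = fun v => ∑ j, B i j * v j := by
        funext v; simp [Matrix.mulVec, dotProduct]
      rw [this]
      exact Finset.measurable_sum _ (fun j _ => (measurable_pi_apply j).const_mul _)
    have hind : ProbabilityTheory.IndepFun (g i) (fun ω => ε ω i) μ :=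
      hindep.comp hmeas (measurable_pi_apply i)
    have := hind.integral_mul_eq_mul_integral (hg i).1 (hεi i).1
    simp only [Pi.mul_apply] at this
    calc ∫ ω, g i ω * ε ω i ∂μ = (∫ ω, g i ω ∂μ) * (∫ ω, ε ω i ∂μ) := this
    _ = 0 := by rw [hmeani i, mul_zero]
  -- integrability of the pieces
  have h1 : ∀ i : Fin m, Integrable (fun ω => g i ω ^ 2) μ := fun i => by
    simpa [pow_two] using integrable_mul2 (hg i) (hg i)
  have h2 : ∀ i : Fin m, Integrable (fun ω => g i ω * ε ω i) μ := fun i =>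
    integrable_mul2 (hg i) (hεi i)
  have h3 : ∀ i : Fin m, Integrable (fun ω => ε ω i ^ 2) μ := fun i => by
    simpa [pow_two] using integrable_mul2 (hεi i) (hεi i)
  -- expand the square
  have hexp : (fun ω => ∑ i, (B *ᵥ X ω + ε ω) i ^ 2)
      = fun ω => ∑ i, (g i ω ^ 2 + 2 * (g i ω * ε ω i) + ε ω i ^ 2) := by
    funext ω
    refine Finset.sum_congr rfl fun i _ => ?_
    simp only [Pi.add_apply, hgdef]
    ring
  rw [hexp]
  rw [integral_finset_sum _ fun i _ =>
    show Integrable (fun ω => g i ω ^ 2 + 2 * (g i ω * ε ω i) + ε ω i ^ 2) μ from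
      ((h1 i).add ((h2 i).const_mul 2)).add (h3 i)]
  have hterm : ∀ i : Fin m, ∫ ω, (g i ω ^ 2 + 2 * (g i ω * ε ω i) + ε ω i ^ 2) ∂μ
      = (∫ ω, g i ω ^ 2 ∂μ) + ∫ ω, ε ω i ^ 2 ∂μ := by
    intro i
    rw [integral_add (f := fun ω => g i ω ^ 2 + 2 * (g i ω * ε ω i))
        (g := fun ω => ε ω i ^ 2) ((h1 i).add ((h2 i).const_mul 2)) (h3 i),
      integral_add (f := fun ω => g i ω ^ 2) (g := fun ω => 2 * (g i ω * ε ω i))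
        (h1 i) ((h2 i).const_mul 2), integral_const_mul, hcross i]
    ring
  simp only [hterm]
  rw [Finset.sum_add_distrib]
  congr 1
  -- compute ∑ i ∫ (g i)²
  have hsq : ∀ i : Fin m, ∫ ω, g i ω ^ 2 ∂μ
      = ∑ j, ∑ l, B i j * B i l * (secondMoment μ X X) j l := by
    intro i
    have hpt : (fun ω => g i ω ^ 2)
        = fun ω => ∑ j, ∑ l, B i j * B i l * (X ω j * X ω l) := by
      funext ω
      simp only [hgdef, Matrix.mulVec, dotProduct, pow_two, Finset.sum_mul_sum]
      refine Finset.sum_congr rfl fun j _ => Finset.sum_congr rfl fun l _ => by ring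
    rw [hpt]
    rw [integral_finset_sum _ (fun j _ => integrable_finset_sum _ (fun l _ =>
      (integrable_mul2 (hXi j) (hXi l)).const_mul _))]
    refine Finset.sum_congr rfl fun j _ => ?_
    rw [integral_finset_sum _ (fun l _ => (integrable_mul2 (hXi j) (hXi l)).const_mul _)]
    refine Finset.sum_congr rfl fun l _ => ?_
    rw [show (fun ω => B i j * B i l * (X ω j * X ω l))
        = fun ω => (B i j * B i l) * (X ω j * X ω l) from rfl, integral_const_mul]
    rfl
  simp only [hsq]
  rw [frob_sq]
  rw [hLX]
  have hmm : B * (LX * LXᵀ) * Bᵀ = (B * LX) * (B * LX)ᵀ := by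
    rw [Matrix.transpose_mul, ← Matrix.mul_assoc, ← Matrix.mul_assoc]
  refine Finset.sum_congr rfl fun i _ => ?_
  have lhs_eq : ∑ j, ∑ l, B i j * B i l * (LX * LXᵀ) j l = (B * (LX * LXᵀ) * Bᵀ) i i := by
    simp only [Matrix.mul_apply, Matrix.transpose_apply, Finset.sum_mul]
    rw [Finset.sum_comm]
    refine Finset.sum_congr rfl fun j _ => Finset.sum_congr rfl fun l _ => by ring
  rw [lhs_eq, hmm]
  simp only [Matrix.mul_apply, Matrix.transpose_apply, pow_two]

end Aux

theorem bayes_risk_completed_square {Ω : Type} [MeasurableSpace Ω]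
    (μ : Measure Ω) [IsProbabilityMeasure μ] {n m k : ℕ}
    (X : Ω → Fin n → ℝ) (ε : Ω → Fin m → ℝ)
    (hX : MemLp X 2 μ) (hε : MemLp ε 2 μ)
    (hindep : ProbabilityTheory.IndepFun X ε μ)
    (hmean : (∫ ω, ε ω ∂μ) = 0)
    (F : Matrix (Fin m) (Fin n) ℝ)
    (LX : Matrix (Fin n) (Fin k) ℝ) (hLX : secondMoment μ X X = LX * LXᵀ)
    (A : Matrix (Fin m) (Fin n) ℝ) :
    ∫ ω, ∑ i, (A *ᵥ X ω - (F *ᵥ X ω + ε ω)) i ^ 2 ∂μ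
      = frob (A * LX - F * LX) ^ 2 - frob (F * LX) ^ 2
          + Matrix.trace
              (secondMoment μ (fun ω => F *ᵥ X ω + ε ω) (fun ω => F *ᵥ X ω + ε ω)) := by
  have hnegε : MemLp (fun ω => -ε ω) 2 μ := hε.neg
  have hindepneg : ProbabilityTheory.IndepFun X (fun ω => -ε ω) μ :=
    hindep.comp measurable_id measurable_neg
  have hmeanneg : (∫ ω, -ε ω ∂μ) = 0 := by rw [integral_neg, hmean, neg_zero]
  have hL := key X (fun ω => -ε ω) hX hnegε hindepneg hmeanneg (A - F) LX hLX
  have hR := key X ε hX hε hindep hmean F LX hLX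
  have hLHS : (fun ω => ∑ i, (A *ᵥ X ω - (F *ᵥ X ω + ε ω)) i ^ 2)
      = fun ω => ∑ i, ((A - F) *ᵥ X ω + (-ε ω)) i ^ 2 := by
    funext ω
    refine Finset.sum_congr rfl fun i _ => ?_
    simp only [Matrix.sub_mulVec, Pi.add_apply, Pi.sub_apply, Pi.neg_apply]
    ring
  rw [show (∫ ω, ∑ i, (A *ᵥ X ω - (F *ᵥ X ω + ε ω)) i ^ 2 ∂μ)
      = ∫ ω, ∑ i, ((A - F) *ᵥ X ω + (-ε ω)) i ^ 2 ∂μ from by rw [hLHS]]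
  rw [hL]
  -- trace of Γ_Y
  have hg : ∀ i, MemLp (fun ω => (F *ᵥ X ω) i) 2 μ := memLp_mulVec hX F
  have hεi : ∀ i, MemLp (fun ω => ε ω i) 2 μ := memLp_proj hε
  have hYi : ∀ i : Fin m, MemLp (fun ω => (F *ᵥ X ω + ε ω) i) 2 μ := fun i =>
    (hg i).add (hεi i)
  have htr : Matrix.trace (secondMoment μ (fun ω => F *ᵥ X ω + ε ω)
      (fun ω => F *ᵥ X ω + ε ω)) = ∑ i, ∫ ω, (F *ᵥ X ω + ε ω) i ^ 2 ∂μ := by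
    unfold Matrix.trace secondMoment
    refine Finset.sum_congr rfl fun i _ => ?_
    simp only [Matrix.diag_apply, Matrix.of_apply]
    exact integral_congr_ae (Filter.EventuallyEq.of_eq (by funext ω; ring))
  rw [htr, ← integral_finset_sum _ (fun i _ =>
    show Integrable (fun ω => (F *ᵥ X ω + ε ω) i ^ 2) μ from by
      simpa [pow_two] using integrable_mul2 (hYi i) (hYi i)), hR]
  have hsub : (A - F) * LX = A * LX - F * LX := Matrix.sub_mul _ _ _
  have hnegsq : ∀ i : Fin m, (∫ ω, (-ε ω) i ^ 2 ∂μ) = ∫ ω, ε ω i ^ 2 ∂μ := by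
    intro i
    refine integral_congr_ae (Filter.EventuallyEq.of_eq ?_)
    funext ω
    simp
  simp only [hsub, hnegsq]
  ring
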